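/- Let G be a finite simple graph on n ≥ 1 vertices, let γ = |E(G)| / n² (where |E(G)| is the number of edges), and let N_s(G) denote the number of s-element cliques of G. Let r be an integer with 2 ≤ r ≤ n. If γ ≥ (r−2) / (2(r−1)), then N_r(G) ≥ ((2(r−1)γ − (r−2)) / r) · n · N_{r−1}(G), and moreover N_{r−1}(G) > 0. -/

import Mathlib

open Finset

namespace CliqueCountAux

variable {n : ℕ} (G : SimpleGraph (Fin n)) [DecidableRel G.Adj]

/-- The set of vertices adjacent to every vertex of `L`. -/
def ext (L : Finset (Fin n)) : Finset (Fin n) :=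
  Finset.univ.filter (fun u => ∀ v ∈ L, G.Adj u v)

lemma mem_ext {L : Finset (Fin n)} {u : Fin n} :
    u ∈ ext G L ↔ ∀ v ∈ L, G.Adj u v := by simp [ext]

lemma not_mem_of_mem_ext {L : Finset (Fin n)} {u : Fin n} (h : u ∈ ext G L) : u ∉ L :=
  fun hu => (((mem_ext G).1 h) u hu).ne rfl

lemma erase_mem_clique {s : ℕ} {K : Finset (Fin n)} (hK : K ∈ G.cliqueFinset (s+1))
    {v : Fin n} (hv : v ∈ K) : K.erase v ∈ G.cliqueFinset s := by
  rw [SimpleGraph.mem_cliqueFinset_iff] at hK ⊢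
  refine ⟨hK.1.subset ?_, ?_⟩
  · simpa using Finset.erase_subset v K
  · rw [Finset.card_erase_of_mem hv, hK.2]; omega

lemma mem_ext_erase {K : Finset (Fin n)} (hK : G.IsClique (K : Set (Fin n)))
    {v : Fin n} (hv : v ∈ K) : v ∈ ext G (K.erase v) := by
  rw [mem_ext]
  intro w hw
  rw [Finset.mem_erase] at hw
  exact (hK hw.2 hv hw.1).symm

lemma insert_mem_clique {s : ℕ} {L : Finset (Fin n)} (hL : L ∈ G.cliqueFinset s)
    {u : Fin n} (hu : u ∈ ext G L) : insert u L ∈ G.cliqueFinset (s+1) := by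
  rw [SimpleGraph.mem_cliqueFinset_iff] at hL ⊢
  exact hL.insert ((mem_ext G).1 hu)

/-- Key double-counting transfer lemma. -/
lemma sum_transfer (s : ℕ) (f : Finset (Fin n) → ℕ) :
    ∑ K ∈ G.cliqueFinset (s+1), ∑ v ∈ K, f (K.erase v)
      = ∑ L ∈ G.cliqueFinset s, (ext G L).card * f L := by
  have h2 : ∑ L ∈ G.cliqueFinset s, (ext G L).card * f L
      = ∑ L ∈ G.cliqueFinset s, ∑ _u ∈ ext G L, f L := by
    refine Finset.sum_congr rfl fun L _ => ?_
    rw [Finset.sum_const, smul_eq_mul]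
  rw [h2, Finset.sum_sigma', Finset.sum_sigma']
  refine Finset.sum_nbij' (fun x => ⟨x.1.erase x.2, x.2⟩) (fun x => ⟨insert x.2 x.1, x.2⟩)
    ?_ ?_ ?_ ?_ ?_
  · rintro ⟨K, v⟩ hx
    rw [Finset.mem_sigma] at hx ⊢
    exact ⟨erase_mem_clique G hx.1 hx.2,
      mem_ext_erase G (SimpleGraph.mem_cliqueFinset_iff.1 hx.1).1 hx.2⟩
  · rintro ⟨L, u⟩ hx
    rw [Finset.mem_sigma] at hx ⊢
    exact ⟨insert_mem_clique G hx.1 hx.2, Finset.mem_insert_self _ _⟩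
  · rintro ⟨K, v⟩ hx
    rw [Finset.mem_sigma] at hx
    simp only
    rw [Finset.insert_erase hx.2]
  · rintro ⟨L, u⟩ hx
    rw [Finset.mem_sigma] at hx
    simp only
    rw [Finset.erase_insert (not_mem_of_mem_ext G hx.2)]
  · rintro ⟨K, v⟩ _
    rfl


lemma pointwise {K : Finset (Fin n)} (hK : G.IsClique (K : Set (Fin n))) :
    (∑ v ∈ K, (ext G (K.erase v)).card) + (ext G K).card
      ≤ K.card * (ext G K).card + n := by
  classical
  have hcard : ∀ L : Finset (Fin n),
      (ext G L).card = ∑ u ∈ univ, (if ∀ v ∈ L, G.Adj u v then 1 else 0) := by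
    intro L; rw [ext, Finset.card_filter]
  have key : (∑ v ∈ K, (ext G (K.erase v)).card)
      ≤ ∑ u ∈ univ, (if u ∈ ext G K then K.card else 1) := by
    calc (∑ v ∈ K, (ext G (K.erase v)).card)
        = ∑ u ∈ univ, ∑ v ∈ K, (if ∀ w ∈ K.erase v, G.Adj u w then 1 else 0) := by
          simp_rw [hcard]; rw [Finset.sum_comm]
      _ ≤ ∑ u ∈ univ, (if u ∈ ext G K then K.card else 1) := by
          refine Finset.sum_le_sum fun u _ => ?_
          rw [← Finset.card_filter]
          by_cases hu : u ∈ ext G K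
          · rw [if_pos hu]; exact Finset.card_filter_le _ _
          · rw [if_neg hu]
            refine Finset.card_le_one.2 ?_
            intro v1 h1 v2 h2
            rw [Finset.mem_filter] at h1 h2
            by_contra hne
            refine hu ((mem_ext G).2 fun w hw => ?_)
            rcases ne_or_eq w v1 with hw1 | rfl
            · exact h1.2 w (Finset.mem_erase.2 ⟨hw1, hw⟩)
            · exact h2.2 w (Finset.mem_erase.2 ⟨hne, hw⟩)
  have hsplit : ∑ u ∈ univ, (if u ∈ ext G K then K.card else 1)
      = (ext G K).card * K.card + (univ.filter (fun u => u ∉ ext G K)).card := by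
    rw [Finset.sum_ite, Finset.sum_const, Finset.sum_const, smul_eq_mul, smul_eq_mul, mul_one]
    have h1 : univ.filter (fun u => u ∈ ext G K) = ext G K := by ext u; simp
    rw [h1]
  have hn2 : (ext G K).card + (univ.filter (fun u => u ∉ ext G K)).card = n := by
    have h := Finset.card_filter_add_card_filter_not
      (s := (univ : Finset (Fin n))) (p := fun u => u ∈ ext G K)
    have h1 : univ.filter (fun u => u ∈ ext G K) = ext G K := by ext u; simp
    rw [h1] at h
    simpa using h
  calc (∑ v ∈ K, (ext G (K.erase v)).card) + (ext G K).card
      ≤ ((ext G K).card * K.card + (univ.filter (fun u => u ∉ ext G K)).card)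
          + (ext G K).card := by
        exact Nat.add_le_add_right (key.trans_eq hsplit) _
    _ = K.card * (ext G K).card + n := by
        rw [mul_comm]; omega

lemma sum_ext_eq (s : ℕ) :
    ∑ L ∈ G.cliqueFinset s, (ext G L).card = (s+1) * (G.cliqueFinset (s+1)).card := by
  have h := sum_transfer G s (fun _ => 1)
  simp only [mul_one] at h
  rw [← h]
  calc ∑ K ∈ G.cliqueFinset (s+1), ∑ _v ∈ K, 1
      = ∑ K ∈ G.cliqueFinset (s+1), (s+1) := by
        refine Finset.sum_congr rfl fun K hK => ?_
        rw [Finset.sum_const, smul_eq_mul, mul_one,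
          (SimpleGraph.mem_cliqueFinset_iff.1 hK).2]
    _ = (s+1) * (G.cliqueFinset (s+1)).card := by
        rw [Finset.sum_const, smul_eq_mul, mul_comm]

lemma sum_sq_le (s : ℕ) :
    (∑ L ∈ G.cliqueFinset s, (ext G L).card ^ 2) + (s+2) * (G.cliqueFinset (s+2)).card
      ≤ (s+1) * ((s+2) * (G.cliqueFinset (s+2)).card) + n * (G.cliqueFinset (s+1)).card := by
  have hB := sum_transfer G s (fun L => (ext G L).card)
  have hA1 := sum_ext_eq G (s+1)
  have hpt : ∀ K ∈ G.cliqueFinset (s+1),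
      (∑ v ∈ K, (ext G (K.erase v)).card) + (ext G K).card
        ≤ (s+1) * (ext G K).card + n := by
    intro K hK
    have h := pointwise G (SimpleGraph.mem_cliqueFinset_iff.1 hK).1
    rwa [(SimpleGraph.mem_cliqueFinset_iff.1 hK).2] at h
  have hsum := Finset.sum_le_sum hpt
  rw [Finset.sum_add_distrib, hB, Finset.sum_add_distrib, ← Finset.mul_sum, hA1,
    Finset.sum_const, smul_eq_mul] at hsum
  have hsq : ∑ L ∈ G.cliqueFinset s, (ext G L).card * (ext G L).card
      = ∑ L ∈ G.cliqueFinset s, (ext G L).card ^ 2 := by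
    refine Finset.sum_congr rfl fun L _ => ?_; ring
  rw [hsq] at hsum
  linarith [hsum]

/-- Moon–Moser inequality. -/
lemma moon_moser (s : ℕ) :
    (((s:ℝ)+1) * (G.cliqueFinset (s+1)).card)^2
      ≤ ((G.cliqueFinset s).card : ℝ) *
          ((s:ℝ) * (((s:ℝ)+2) * (G.cliqueFinset (s+2)).card)
            + (n:ℝ) * (G.cliqueFinset (s+1)).card) := by
  have hCS := sq_sum_le_card_mul_sum_sq (s := G.cliqueFinset s)
    (f := fun L => ((ext G L).card : ℝ))
  have hA := sum_ext_eq G s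
  have hB := sum_sq_le G s
  have h1 : (∑ L ∈ G.cliqueFinset s, ((ext G L).card : ℝ)) = ((s:ℝ)+1) * (G.cliqueFinset (s+1)).card := by
    rw [← Nat.cast_sum, hA]; push_cast; ring
  have h2 : (∑ L ∈ G.cliqueFinset s, ((ext G L).card : ℝ) ^ 2)
      = ((∑ L ∈ G.cliqueFinset s, (ext G L).card ^ 2 : ℕ) : ℝ) := by
    push_cast; ring_nf
  have h3 : ((∑ L ∈ G.cliqueFinset s, (ext G L).card ^ 2 : ℕ) : ℝ)
      ≤ (s:ℝ) * (((s:ℝ)+2) * (G.cliqueFinset (s+2)).card) + (n:ℝ) * (G.cliqueFinset (s+1)).card := by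
    have := (Nat.cast_le (α := ℝ)).2 hB
    push_cast at this ⊢
    nlinarith [this]
  rw [h1, h2] at hCS
  have hnn : (0:ℝ) ≤ ((G.cliqueFinset s).card : ℝ) := by positivity
  nlinarith [hCS, h3, hnn]


lemma card_clique_one : (G.cliqueFinset 1).card = n := by
  have h : G.cliqueFinset 1 = univ.image (fun v : Fin n => ({v} : Finset (Fin n))) := by
    ext s
    simp [SimpleGraph.mem_cliqueFinset_iff, SimpleGraph.isNClique_one, eq_comm]
  rw [h, Finset.card_image_of_injective _ (fun a b hab => by simpa using hab)]
  simp

lemma card_clique_two : (G.cliqueFinset 2).card = G.edgeFinset.card := by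
  refine (Finset.card_nbij
    (fun e => Sym2.lift ⟨fun a b => ({a, b} : Finset (Fin n)), fun a b => Finset.pair_comm a b⟩ e)
    ?_ ?_ ?_).symm
  · intro e he
    induction e using Sym2.ind with
    | _ a b =>
      rw [Finset.mem_coe, SimpleGraph.mem_edgeFinset, SimpleGraph.mem_edgeSet] at he
      simp only [Sym2.lift_mk]
      rw [Finset.mem_coe, SimpleGraph.mem_cliqueFinset_iff]
      refine ⟨?_, by rw [Finset.card_pair he.ne]⟩
      rw [Finset.coe_insert, Finset.coe_singleton, SimpleGraph.isClique_pair]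
      exact fun _ => he
  · intro e he e' he' h
    induction e using Sym2.ind with
    | _ a b =>
    induction e' using Sym2.ind with
    | _ c d =>
      simp only [Sym2.lift_mk] at h
      rw [Finset.mem_coe, SimpleGraph.mem_edgeFinset, SimpleGraph.mem_edgeSet] at he he'
      have hab : a ≠ b := he.ne
      have ha : a = c ∨ a = d := by
        have : a ∈ ({c, d} : Finset (Fin n)) := h ▸ Finset.mem_insert_self a {b}
        simpa using this
      have hb : b = c ∨ b = d := by
        have : b ∈ ({c, d} : Finset (Fin n)) :=
          h ▸ (by simp : b ∈ ({a, b} : Finset (Fin n)))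
        simpa using this
      rw [Sym2.eq_iff]
      rcases ha with rfl | rfl
      · rcases hb with rfl | rfl
        · exact absurd rfl hab
        · exact Or.inl ⟨rfl, rfl⟩
      · rcases hb with rfl | rfl
        · exact Or.inr ⟨rfl, rfl⟩
        · exact absurd rfl hab
  · intro t ht
    rw [Finset.mem_coe, SimpleGraph.mem_cliqueFinset_iff] at ht
    obtain ⟨a, b, hab, rfl⟩ := Finset.card_eq_two.1 ht.2
    have hadj : G.Adj a b := ht.1 (by simp) (by simp) hab
    exact ⟨s(a, b), by simpa [SimpleGraph.mem_edgeFinset] using hadj, by simp⟩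

lemma arith (r g m a b c : ℝ) (hr : 0 ≤ r) (hm : 1 ≤ m) (ha : 0 < a) (hb : 0 < b)
    (hc : 0 ≤ c)
    (hMM : ((r+2)*b)^2 ≤ a*((r+1)*((r+3)*c) + m*b))
    (hIH : b ≥ ((2*(r+1)*g - r)/(r+2)) * m * a)
    (hγ : g ≥ (r+1)/(2*(r+2))) :
    c ≥ ((2*(r+2)*g - (r+1))/(r+3)) * m * b ∧ ((r+1)/(2*(r+2)) < g → 0 < c) := by
  have hIH' : (2*(r+1)*g - r) * m * a ≤ (r+2) * b := by
    rw [ge_iff_le, div_mul_eq_mul_div, div_mul_eq_mul_div,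
      div_le_iff₀ (by positivity : (0:ℝ) < r+2)] at hIH
    linarith
  have hγ2 : r + 1 ≤ 2*(r+2)*g := by
    rw [ge_iff_le, div_le_iff₀ (by positivity : (0:ℝ) < 2*(r+2))] at hγ
    linarith
  have hb2 : (0:ℝ) ≤ (r+2)*b := by positivity
  have hmul := mul_le_mul_of_nonneg_right hIH' hb2
  have h5 : a * ((2*(r+1)*g - r) * m * ((r+2)*b)) ≤ a * ((r+1)*((r+3)*c) + m*b) := by
    linarith [hmul, hMM]
  have h6 := le_of_mul_le_mul_left h5 ha
  have hmain : ((2*(r+2)*g - (r+1))/(r+3)) * m * b ≤ c := by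
    rw [div_mul_eq_mul_div, div_mul_eq_mul_div,
      div_le_iff₀ (by positivity : (0:ℝ) < r+3)]
    have h7 : (r+1) * ((2*(r+2)*g - (r+1)) * m * b) ≤ (r+1) * (c * (r+3)) := by
      linarith [h6]
    exact le_of_mul_le_mul_left h7 (by positivity)
  refine ⟨hmain, fun hgt => ?_⟩
  have hY : (0:ℝ) < 2*(r+2)*g - (r+1) := by
    rw [div_lt_iff₀ (by positivity : (0:ℝ) < 2*(r+2))] at hgt
    linarith
  have h8 : (0:ℝ) < ((2*(r+2)*g - (r+1))/(r+3)) * m * b :=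
    mul_pos (mul_pos (div_pos hY (by positivity)) (by linarith)) hb
  linarith

lemma main_ind (hn : 1 ≤ n) (k : ℕ)
    (hγ : (G.edgeFinset.card : ℝ) / (n : ℝ) ^ 2 ≥ (k : ℝ) / (2 * ((k : ℝ) + 1))) :
    (((G.cliqueFinset (k+2)).card : ℝ) ≥
      ((2 * ((k : ℝ) + 1) * ((G.edgeFinset.card : ℝ) / (n : ℝ) ^ 2) - (k : ℝ)) / ((k : ℝ) + 2))
        * (n : ℝ) * ((G.cliqueFinset (k+1)).card : ℝ))
    ∧ 0 < (G.cliqueFinset (k+1)).card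
    ∧ ((G.edgeFinset.card : ℝ) / (n : ℝ) ^ 2 > (k : ℝ) / (2 * ((k : ℝ) + 1))
        → 0 < (G.cliqueFinset (k+2)).card) := by
  induction k with
  | zero =>
    have hn' : ((n : ℝ)) ≠ 0 := by positivity
    refine ⟨?_, ?_, ?_⟩
    · rw [card_clique_two, card_clique_one]
      push_cast
      have heq : ((2 * ((0 : ℝ) + 1) * ((G.edgeFinset.card : ℝ) / (n : ℝ) ^ 2) - (0 : ℝ))
          / ((0 : ℝ) + 2)) * (n : ℝ) * (n : ℝ) = (G.edgeFinset.card : ℝ) := by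
        field_simp
        ring
      rw [heq]
    · rw [card_clique_one]; omega
    · intro hpos
      rw [card_clique_two]
      push_cast at hpos
      rcases Nat.eq_zero_or_pos G.edgeFinset.card with h0 | h0
      · exfalso; rw [h0] at hpos; norm_num at hpos
      · exact h0
  | succ k ih =>
    push_cast at hγ ⊢
    rw [show k+1+2 = k+3 from rfl, show k+1+1 = k+2 from rfl]
    have hmono : (k : ℝ) / (2 * ((k:ℝ) + 1)) < ((k:ℝ) + 1) / (2 * ((k:ℝ) + 2)) := by
      rw [div_lt_div_iff₀ (by positivity) (by positivity)]
      nlinarith [Nat.cast_nonneg (α := ℝ) k]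
    have hγ' : (G.edgeFinset.card : ℝ) / (n : ℝ) ^ 2 ≥ ((k:ℝ) + 1) / (2 * ((k:ℝ) + 2)) := by
      rw [show (2 * ((k:ℝ) + 2)) = 2 * ((k:ℝ) + 1 + 1) from by ring]
      exact hγ
    obtain ⟨hIH, hA, hstrict⟩ := ih (le_of_lt (lt_of_lt_of_le hmono hγ'))
    have hBposN : 0 < (G.cliqueFinset (k+2)).card := hstrict (lt_of_lt_of_le hmono hγ')
    have hMM := moon_moser G (k+1)
    rw [show k+1+1 = k+2 from rfl, show k+1+2 = k+3 from rfl] at hMM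
    push_cast at hMM
    have hMM' : (((k:ℝ)+2) * ((G.cliqueFinset (k+2)).card : ℝ))^2
        ≤ ((G.cliqueFinset (k+1)).card : ℝ) *
            (((k:ℝ)+1)*((((k:ℝ)+3) * ((G.cliqueFinset (k+3)).card : ℝ)))
              + (n:ℝ) * ((G.cliqueFinset (k+2)).card : ℝ)) := by
      linarith [hMM]
    have ha : (0:ℝ) < ((G.cliqueFinset (k+1)).card : ℝ) := by exact_mod_cast hA
    have hb : (0:ℝ) < ((G.cliqueFinset (k+2)).card : ℝ) := by exact_mod_cast hBposN
    obtain ⟨hmain, hpos⟩ := arith ((k:ℝ)) ((G.edgeFinset.card : ℝ) / (n : ℝ) ^ 2) (n:ℝ)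
      ((G.cliqueFinset (k+1)).card : ℝ) ((G.cliqueFinset (k+2)).card : ℝ)
      ((G.cliqueFinset (k+3)).card : ℝ)
      (Nat.cast_nonneg k) (by exact_mod_cast hn) ha hb (Nat.cast_nonneg _)
      hMM' hIH hγ'
    refine ⟨?_, hBposN, fun hgt => ?_⟩
    · rw [show ((k:ℝ)+1+1) = ((k:ℝ)+2) from by ring, show ((k:ℝ)+1+2) = ((k:ℝ)+3) from by ring]
      exact hmain
    · have hgt' : ((k:ℝ) + 1) / (2 * ((k:ℝ) + 2)) < (G.edgeFinset.card : ℝ) / (n : ℝ) ^ 2 := by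
        rw [show (2 * ((k:ℝ) + 2)) = 2 * ((k:ℝ) + 1 + 1) from by ring]
        exact hgt
      have := hpos hgt'
      exact_mod_cast this

end CliqueCountAux

/-- Khadžiivanov–Nikiforov clique counting: if `γ = |E(G)|/n² ≥ (r-2)/(2(r-1))`, then
`N_r(G) ≥ ((2(r-1)γ - (r-2))/r) · n · N_{r-1}(G)` and `N_{r-1}(G) > 0`. -/
theorem clique_count_bound (n : ℕ) (hn : 1 ≤ n) (G : SimpleGraph (Fin n))
    (r : ℕ) (hr2 : 2 ≤ r) (hrn : r ≤ n)
    (hγ : (G.edgeSet.ncard : ℝ) / (n : ℝ) ^ 2 ≥ ((r : ℝ) - 2) / (2 * ((r : ℝ) - 1))) :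
    ((G.cliqueSet r).ncard : ℝ) ≥
      ((2 * ((r : ℝ) - 1) * ((G.edgeSet.ncard : ℝ) / (n : ℝ) ^ 2) - ((r : ℝ) - 2)) / r)
        * (n : ℝ) * ((G.cliqueSet (r - 1)).ncard : ℝ) ∧
    0 < (G.cliqueSet (r - 1)).ncard := by
  classical
  obtain ⟨k, rfl⟩ : ∃ k, r = k + 2 := ⟨r - 2, by omega⟩
  have hE : (G.edgeSet.ncard : ℝ) = (G.edgeFinset.card : ℝ) := by
    rw [← SimpleGraph.coe_edgeFinset, Set.ncard_coe_finset]
  have hC2 : ((G.cliqueSet (k+2)).ncard : ℕ) = (G.cliqueFinset (k+2)).card := by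
    rw [← SimpleGraph.coe_cliqueFinset, Set.ncard_coe_finset]
  have hC1 : ((G.cliqueSet (k+2-1)).ncard : ℕ) = (G.cliqueFinset (k+1)).card := by
    rw [show k+2-1 = k+1 from rfl, ← SimpleGraph.coe_cliqueFinset, Set.ncard_coe_finset]
  rw [hE] at hγ ⊢
  rw [hC2, hC1]
  push_cast at hγ ⊢
  have e1 : ((k:ℝ) + 2 - 2) = (k:ℝ) := by ring
  have e2 : ((k:ℝ) + 2 - 1) = (k:ℝ) + 1 := by ring
  rw [e1, e2] at hγ ⊢
  obtain ⟨h1, h2, _⟩ := CliqueCountAux.main_ind G hn k hγ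
  refine ⟨?_, by exact_mod_cast h2⟩
  exact_mod_cast h1
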